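/- Let 1 ≤ j ≤ p be integers, τ > 0, ε > 0, δ ∈ (0,1], r > 0, and suppose τ ε δ^j ≤ r^{p+1} χ_j(δ/r), where χ_j(t) = ∑_{ℓ=1}^j t^ℓ / ℓ!. Then: (a) if r ≤ δ, one has r^{p−j+1} ≥ τ ε / 2; and (b) if r > δ, one has r^p ≥ (τ ε / 2) δ^{j−1}. -/

import Mathlib

private lemma two_pow_le_fact (j : ℕ) : 2 ^ j ≤ (j + 1).factorial := by
  induction j with
  | zero => simp
  | succ n ih =>
    rw [pow_succ, Nat.factorial_succ]
    calc 2 ^ n * 2 ≤ (n + 1).factorial * 2 := by exact Nat.mul_le_mul_right _ ih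
    _ ≤ (n + 1 + 1) * (n + 1).factorial := by
        rw [mul_comm]; exact Nat.mul_le_mul_right _ (by omega)

private lemma sum_inv_fact_le (j : ℕ) :
    ∑ ℓ ∈ Finset.Icc 1 j, (1 : ℝ) / (ℓ.factorial : ℝ) ≤ 2 - 2 * (1 / 2) ^ j := by
  induction j with
  | zero => simp
  | succ n ih =>
    rw [Finset.sum_Icc_succ_top (by omega)]
    have h1 : (1 : ℝ) / ((n + 1).factorial : ℝ) ≤ (1 / 2) ^ n := by
      rw [div_le_iff₀ (by positivity), one_div, inv_pow, inv_mul_eq_div,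
        le_div_iff₀ (by positivity), one_mul]
      exact_mod_cast two_pow_le_fact n
    have := pow_succ (1/2 : ℝ) n
    nlinarith [pow_pos (by norm_num : (0:ℝ) < 1/2) n]

/-- Step-length lower bound: if
`τ ε δ^j ≤ r^{p+1} χ_j(δ/r)` with `χ_j(t) = ∑_{ℓ=1}^j t^ℓ/ℓ!`, then
`r ≤ δ` implies `r^{p−j+1} ≥ τ ε / 2`, while `r > δ` implies
`r^p ≥ (τ ε / 2) δ^{j−1}`. -/
theorem step_length_lower_bound (j p : ℕ) (hj : 1 ≤ j) (hjp : j ≤ p)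
    (τ ε δ r : ℝ) (hτ : 0 < τ) (hε : 0 < ε)
    (hδ0 : 0 < δ) (hδ1 : δ ≤ 1) (hr : 0 < r)
    (h : τ * ε * δ ^ j ≤
      r ^ (p + 1) * ∑ ℓ ∈ Finset.Icc 1 j, (δ / r) ^ ℓ / (ℓ.factorial : ℝ)) :
    (r ≤ δ → τ * ε / 2 ≤ r ^ (p - j + 1)) ∧
    (δ < r → τ * ε / 2 * δ ^ (j - 1) ≤ r ^ p) := by
  have hsum2 : ∑ ℓ ∈ Finset.Icc 1 j, (1 : ℝ) / (ℓ.factorial : ℝ) ≤ 2 := by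
    have := sum_inv_fact_le j
    nlinarith [pow_pos (by norm_num : (0:ℝ) < 1/2) j]
  have hq : 0 < δ / r := div_pos hδ0 hr
  constructor
  · intro hrd
    have hq1 : 1 ≤ δ / r := (one_le_div hr).2 hrd
    have hbound : ∑ ℓ ∈ Finset.Icc 1 j, (δ / r) ^ ℓ / (ℓ.factorial : ℝ)
        ≤ (δ / r) ^ j * 2 := by
      calc ∑ ℓ ∈ Finset.Icc 1 j, (δ / r) ^ ℓ / (ℓ.factorial : ℝ)
          ≤ ∑ ℓ ∈ Finset.Icc 1 j, (δ / r) ^ j * (1 / (ℓ.factorial : ℝ)) := by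
            apply Finset.sum_le_sum
            intro ℓ hℓ
            rw [Finset.mem_Icc] at hℓ
            rw [mul_one_div]
            apply div_le_div_of_nonneg_right _ (by positivity)
            · exact pow_le_pow_right₀ hq1 hℓ.2
        _ = (δ / r) ^ j * ∑ ℓ ∈ Finset.Icc 1 j, (1 / (ℓ.factorial : ℝ)) := by
            rw [Finset.mul_sum]
        _ ≤ (δ / r) ^ j * 2 := by
            apply mul_le_mul_of_nonneg_left hsum2 (by positivity)
    have key : τ * ε * δ ^ j ≤ 2 * r ^ (p - j + 1) * δ ^ j := by
      have h2 : τ * ε * δ ^ j ≤ r ^ (p + 1) * ((δ / r) ^ j * 2) := by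
        refine h.trans ?_
        exact mul_le_mul_of_nonneg_left hbound (by positivity)
      have heq : r ^ (p + 1) * ((δ / r) ^ j * 2) = 2 * r ^ (p - j + 1) * δ ^ j := by
        have hpj : p + 1 = (p - j + 1) + j := by omega
        rw [div_pow, hpj, pow_add]
        field_simp
      rwa [heq] at h2
    have := (mul_le_mul_iff_of_pos_right (pow_pos hδ0 j)).1 key
    linarith
  · intro hdr
    have hq1 : δ / r ≤ 1 := (div_le_one hr).2 hdr.le
    have hbound : ∑ ℓ ∈ Finset.Icc 1 j, (δ / r) ^ ℓ / (ℓ.factorial : ℝ)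
        ≤ (δ / r) * 2 := by
      calc ∑ ℓ ∈ Finset.Icc 1 j, (δ / r) ^ ℓ / (ℓ.factorial : ℝ)
          ≤ ∑ ℓ ∈ Finset.Icc 1 j, (δ / r) * (1 / (ℓ.factorial : ℝ)) := by
            apply Finset.sum_le_sum
            intro ℓ hℓ
            rw [Finset.mem_Icc] at hℓ
            rw [mul_one_div]
            apply div_le_div_of_nonneg_right _ (by positivity)
            · calc (δ / r) ^ ℓ ≤ (δ / r) ^ 1 :=
                    pow_le_pow_of_le_one hq.le hq1 hℓ.1
                _ = δ / r := pow_one _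
        _ = (δ / r) * ∑ ℓ ∈ Finset.Icc 1 j, (1 / (ℓ.factorial : ℝ)) := by
            rw [Finset.mul_sum]
        _ ≤ (δ / r) * 2 := mul_le_mul_of_nonneg_left hsum2 hq.le
    have h2 : τ * ε * δ ^ j ≤ 2 * r ^ p * δ := by
      have := h.trans (mul_le_mul_of_nonneg_left hbound (by positivity))
      have heq : r ^ (p + 1) * ((δ / r) * 2) = 2 * r ^ p * δ := by
        rw [pow_succ]; field_simp
      linarith [heq ▸ this]
    have hdj : δ ^ j = δ ^ (j - 1) * δ := by
      rw [← pow_succ]; congr 1; omega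
    rw [hdj, ← mul_assoc] at h2
    have := (mul_le_mul_iff_of_pos_right hδ0).1 h2
    linarith
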